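/- Assume a_1 ≠ 0, let b ∈ ℝ, let H̃ = e^{q_2−q_1}(H+b) and L̃ = L − (H̃/a_1)E_{21} be the transformed Hamiltonian and Lax matrix of the periodic three-particle Toda lattice. Then for all λ ∈ ℝ and μ ≠ 0: det L̃(λ,μ) = a_1a_2a_3·μ + (1 − H̃/a_1)·μ^{-1} + (λ−p_1)(λ−p_2)(λ−p_3) − a_1e^{q_1−q_2}(λ−p_3) − a_2e^{q_2−q_3}(λ−p_1) − a_3e^{q_3−q_1}(λ−p_2) + (H+b)(λ−p_3). In particular the coefficient of μ^{-1} is (a_1 − H̃)/a_1 and, as a polynomial in λ, the coefficient of λ in det L̃ − a_1a_2a_3μ − (1−H̃/a_1)μ^{-1} equals P²/2 + b, where P = p_1+p_2+p_3 (the Hamiltonian H no longer appears in this coefficient, being replaced by the constant b). -/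

import Mathlib

open Real Matrix

/-- The periodic three-particle Toda Hamiltonian. -/
noncomputable def todaH (a1 a2 a3 : ℝ) (z : (Fin 3 → ℝ) × (Fin 3 → ℝ)) : ℝ :=
  (1 / 2) * ((z.1 0) ^ 2 + (z.1 1) ^ 2 + (z.1 2) ^ 2)
    + a1 * exp (z.2 0 - z.2 1) + a2 * exp (z.2 1 - z.2 2)
    + a3 * exp (z.2 2 - z.2 0)

/-- The Toda Lax matrix `L(λ,μ)`. -/
noncomputable def todaL (a1 a2 a3 lam mu : ℝ) (z : (Fin 3 → ℝ) × (Fin 3 → ℝ)) :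
    Matrix (Fin 3) (Fin 3) ℝ :=
  !![lam - z.1 0, a1 * exp (z.2 0 - z.2 1), mu⁻¹;
     1, lam - z.1 1, a2 * exp (z.2 1 - z.2 2);
     mu * a3 * exp (z.2 2 - z.2 0), 1, lam - z.1 2]

/-- The transformed Hamiltonian `H̃ = e^{q₂−q₁}(H + b)`. -/
noncomputable def todaHt (a1 a2 a3 b : ℝ) (z : (Fin 3 → ℝ) × (Fin 3 → ℝ)) : ℝ :=
  exp (z.2 1 - z.2 0) * (todaH a1 a2 a3 z + b)

/-- The transformed Lax matrix `L̃ = L − (H̃/a₁)E₂₁`. -/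
noncomputable def todaLt (a1 a2 a3 b lam mu : ℝ) (z : (Fin 3 → ℝ) × (Fin 3 → ℝ)) :
    Matrix (Fin 3) (Fin 3) ℝ :=
  todaL a1 a2 a3 lam mu z
    - Matrix.single 1 0 (todaHt a1 a2 a3 b z / a1)

/-- the explicit formula for `det L̃(λ,μ)`; the coefficient of
`μ⁻¹` is `(a₁ − H̃)/a₁`, and the coefficient of `λ` in the residual cubic is
`P²/2 + b` (the Hamiltonian is replaced by the constant `b`). -/
theorem stmt_14 (a1 a2 a3 b mu : ℝ) (ha1 : a1 ≠ 0) (hmu : mu ≠ 0)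
    (p q : Fin 3 → ℝ) :
    (∀ lam : ℝ,
      (todaLt a1 a2 a3 b lam mu (p, q)).det =
        a1 * a2 * a3 * mu + (1 - todaHt a1 a2 a3 b (p, q) / a1) * mu⁻¹
          + (lam - p 0) * (lam - p 1) * (lam - p 2)
          - a1 * exp (q 0 - q 1) * (lam - p 2)
          - a2 * exp (q 1 - q 2) * (lam - p 0)
          - a3 * exp (q 2 - q 0) * (lam - p 1)
          + (todaH a1 a2 a3 (p, q) + b) * (lam - p 2)) ∧
    (1 - todaHt a1 a2 a3 b (p, q) / a1 = (a1 - todaHt a1 a2 a3 b (p, q)) / a1) ∧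
    (∃ c2 c0 : ℝ, ∀ lam : ℝ,
      (todaLt a1 a2 a3 b lam mu (p, q)).det - a1 * a2 * a3 * mu
          - (1 - todaHt a1 a2 a3 b (p, q) / a1) * mu⁻¹ =
        lam ^ 3 + c2 * lam ^ 2 + ((p 0 + p 1 + p 2) ^ 2 / 2 + b) * lam + c0) := by

  have key : ∀ lam : ℝ,
      (todaLt a1 a2 a3 b lam mu (p, q)).det =
        a1 * a2 * a3 * mu + (1 - todaHt a1 a2 a3 b (p, q) / a1) * mu⁻¹
          + (lam - p 0) * (lam - p 1) * (lam - p 2)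
          - a1 * exp (q 0 - q 1) * (lam - p 2)
          - a2 * exp (q 1 - q 2) * (lam - p 0)
          - a3 * exp (q 2 - q 0) * (lam - p 1)
          + (todaH a1 a2 a3 (p, q) + b) * (lam - p 2) := by
    intro lam
    have he : exp (q 1 - q 0) * exp (q 0 - q 1) = 1 := by
      rw [← Real.exp_add]; norm_num
    simp only [todaLt, todaL, todaHt, todaH, Matrix.det_fin_three, Matrix.sub_apply,
      Matrix.cons_val', Matrix.cons_val_zero, Matrix.cons_val_one, Matrix.head_cons,
      Matrix.empty_val', Matrix.cons_val_fin_one, Matrix.head_fin_const,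
      Matrix.cons_val_two, Matrix.tail_cons, Matrix.of_apply,
      Matrix.single_apply_same, Matrix.single_apply_of_ne]
    rw [Matrix.single]
    norm_num [show ((1:Fin 3) = 2) = False from by decide, show ((0:Fin 3) = 2) = False from by decide,
      show ((1:Fin 3) = 2 ∧ (0:Fin 3) = 2) = False from by simp]
    rw [show q 1 - q 0 = -(q 0 - q 1) by ring, Real.exp_neg]
    have h3 : exp (q 1 - q 2) * exp (q 2 - q 0) * exp (q 0 - q 1) = 1 := by
      rw [← Real.exp_add, ← Real.exp_add, show q 1 - q 2 + (q 2 - q 0) + (q 0 - q 1) = 0 by ring,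
        Real.exp_zero]
    field_simp
    linear_combination (2 * a1 ^ 2 * mu ^ 2 * exp (q 0 - q 1) * (a2 * a3)) * h3
  refine ⟨key, by field_simp, -(p 0 + p 1 + p 2),
    -(p 0 * p 1 * p 2) + a1 * exp (q 0 - q 1) * p 2 + a2 * exp (q 1 - q 2) * p 0
      + a3 * exp (q 2 - q 0) * p 1 - (todaH a1 a2 a3 (p, q) + b) * p 2, ?_⟩
  intro lam
  rw [key lam]
  simp only [todaH]
  ring
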